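/- Let a : ℝ → ℝ be Bohr almost periodic with positive mean value M(a) = lim_{T→∞} (1/(2T)) ∫_{−T}^{T} a(s) ds > 0. Then there exist constants K ≥ 1 and σ > 0 such that exp(∫_s^t a(u) du) ≤ K exp(σ(t−s)) for all t ≤ s. -/

import Mathlib

open Filter MeasureTheory intervalIntegral

def RelDenseR (S : Set ℝ) : Prop := ∃ L : ℝ, 0 < L ∧ ∀ a : ℝ, ∃ τ ∈ S, τ ∈ Set.Icc a (a + L)

/-- Bohr almost periodic scalar function. -/
def BohrAPR (a : ℝ → ℝ) : Prop :=
  Continuous a ∧ ∀ ε : ℝ, 0 < ε → RelDenseR {τ : ℝ | ∀ t, |a (t + τ) - a t| < ε}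

lemma apr_bounded (a : ℝ → ℝ) (ha : BohrAPR a) : ∃ C : ℝ, 0 ≤ C ∧ ∀ u, |a u| ≤ C := by
  obtain ⟨L, hL, hS⟩ := ha.2 1 one_pos
  obtain ⟨x, -, hx⟩ := isCompact_Icc.exists_isMaxOn (Set.nonempty_Icc.2 hL.le)
    ((continuous_abs.comp ha.1).continuousOn : ContinuousOn (fun u => |a u|) (Set.Icc 0 L))
  refine ⟨|a x| + 1, by positivity, fun u => ?_⟩
  obtain ⟨τ, hτS, hτm⟩ := hS (-u)
  have hmem : u + τ ∈ Set.Icc (0:ℝ) L := by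
    simp only [Set.mem_Icc] at hτm ⊢; constructor <;> linarith [hτm.1, hτm.2]
  have h1 := hτS u
  have h2 : |a (u + τ)| ≤ |a x| := hx hmem
  calc |a u| ≤ |a (u + τ)| + |a (u + τ) - a u| := by
        have := abs_sub_abs_le_abs_sub (a u) (a (u + τ))
        have := abs_sub_comm (a (u+τ)) (a u)
        linarith [abs_sub_abs_le_abs_sub (a u) (a (u+τ)), (abs_sub_comm (a u) (a (u+τ)))]
    _ ≤ |a x| + 1 := by linarith

lemma apr_block (a : ℝ → ℝ) (ha : BohrAPR a) (M : ℝ) (hM : 0 < M)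
    (hmean : Tendsto (fun T : ℝ => (1 / (2 * T)) * ∫ s in (-T)..T, a s) atTop (nhds M))
    (C : ℝ) (hC0 : 0 ≤ C) (hC : ∀ u, |a u| ≤ C) :
    ∃ P : ℝ, 0 < P ∧ ∃ δ : ℝ, 0 < δ ∧ ∀ t : ℝ, δ ≤ ∫ u in t..(t + P), a u := by
  obtain ⟨L, hL, hS⟩ := ha.2 (M/4) (by positivity)
  have h1 : ∀ᶠ T in atTop, 3*M/4 < (1 / (2 * T)) * ∫ s in (-T)..T, a s :=
    hmean.eventually (eventually_gt_nhds (by linarith))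
  obtain ⟨T, hT34, hT1, hTC⟩ :=
    (h1.and ((eventually_ge_atTop (1:ℝ)).and (eventually_ge_atTop (4*C*L/M)))).exists
  have hT0 : (0:ℝ) < T := by linarith
  have hbase : (3*M/4) * (2*T) ≤ ∫ s in (-T)..T, a s := by
    have h2T : (0:ℝ) < 2*T := by linarith
    have := mul_lt_mul_of_pos_right hT34 h2T
    calc (3*M/4) * (2*T) ≤ ((1 / (2 * T)) * ∫ s in (-T)..T, a s) * (2*T) := this.le
      _ = ∫ s in (-T)..T, a s := by field_simp
  refine ⟨2*T, by linarith, T*M/2, by positivity, fun t => ?_⟩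
  obtain ⟨τ, hτS, hτm⟩ := hS (-T - t)
  simp only [Set.mem_Icc] at hτm
  set w : ℝ := t + τ + T with hw
  have hw0 : 0 ≤ w := by simp [hw]; linarith [hτm.1]
  have hwL : w ≤ L := by simp [hw]; linarith [hτm.2]
  have hint : ∀ x y : ℝ, IntervalIntegrable a volume x y :=
    fun x y => ha.1.intervalIntegrable x y
  have hintτ : ∀ x y : ℝ, IntervalIntegrable (fun u => a (u + τ)) volume x y :=
    fun x y => (ha.1.comp (continuous_id.add continuous_const)).intervalIntegrable x y
  -- shift identity
  have hshift : (∫ u in t..(t + 2*T), a (u + τ)) = ∫ v in (w - T)..(w + T), a v := by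
    rw [intervalIntegral.integral_comp_add_right]
    congr 1 <;> simp [hw] <;> ring
  -- difference bound
  have hdiff : |(∫ u in t..(t + 2*T), (a (u + τ) - a u))| ≤ (M/4) * (2*T) := by
    have := intervalIntegral.norm_integral_le_of_norm_le_const
      (C := M/4) (f := fun u => a (u + τ) - a u) (a := t) (b := t + 2*T)
      (fun x _ => by simpa [Real.norm_eq_abs] using (hτS x).le)
    simpa [Real.norm_eq_abs, abs_of_pos (show (0:ℝ) < 2*T by linarith)] using this
  have hsub : (∫ u in t..(t + 2*T), (a (u + τ) - a u))
      = (∫ u in t..(t + 2*T), a (u + τ)) - ∫ u in t..(t + 2*T), a u :=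
    intervalIntegral.integral_sub (hintτ _ _) (hint _ _)
  -- Chasles decomposition of shifted integral
  have hchasles : (∫ v in (w - T)..(w + T), a v)
      = (∫ v in (w - T)..(-T), a v) + (∫ v in (-T)..T, a v) + ∫ v in T..(w + T), a v := by
    rw [intervalIntegral.integral_add_adjacent_intervals (hint _ _) (hint _ _),
      intervalIntegral.integral_add_adjacent_intervals (hint _ _) (hint _ _)]
  have hb1 : |∫ v in (w - T)..(-T), a v| ≤ C * L := by
    have := intervalIntegral.norm_integral_le_of_norm_le_const (C := C)
      (f := a) (a := w - T) (b := -T) (fun x _ => by simpa [Real.norm_eq_abs] using hC x)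
    have h : |(-T) - (w - T)| = w := by rw [show (-T) - (w - T) = -w by ring, abs_neg, abs_of_nonneg hw0]
    rw [Real.norm_eq_abs] at this
    calc |∫ v in (w - T)..(-T), a v| ≤ C * |(-T) - (w - T)| := this
      _ = C * w := by rw [h]
      _ ≤ C * L := by nlinarith
  have hb2 : |∫ v in T..(w + T), a v| ≤ C * L := by
    have := intervalIntegral.norm_integral_le_of_norm_le_const (C := C)
      (f := a) (a := T) (b := w + T) (fun x _ => by simpa [Real.norm_eq_abs] using hC x)
    have h : |(w + T) - T| = w := by rw [show (w + T) - T = w by ring, abs_of_nonneg hw0]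
    rw [Real.norm_eq_abs] at this
    calc |∫ v in T..(w + T), a v| ≤ C * |(w + T) - T| := this
      _ = C * w := by rw [h]
      _ ≤ C * L := by nlinarith
  have key : T*M - 2*(C*L) ≤ ∫ u in t..(t + 2*T), a u := by
    have e1 := abs_le.1 hdiff
    have e2 := abs_le.1 hb1
    have e3 := abs_le.1 hb2
    rw [hsub, hshift, hchasles] at e1
    nlinarith [e1.1, e1.2, e2.1, e3.1, hbase]
  have : 2*(C*L) ≤ T*M/2 := by
    have := (div_le_iff₀ hM).1 hTC
    nlinarith
  linarith

lemma apr_iter (a : ℝ → ℝ) (hcont : Continuous a) (P δ : ℝ)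
    (hblock : ∀ t : ℝ, δ ≤ ∫ u in t..(t + P), a u) :
    ∀ n : ℕ, ∀ t : ℝ, (n : ℝ) * δ ≤ ∫ u in t..(t + n * P), a u := by
  intro n
  induction n with
  | zero => intro t; simp
  | succ n ih =>
    intro t
    have hint : ∀ x y : ℝ, IntervalIntegrable a volume x y :=
      fun x y => hcont.intervalIntegrable x y
    have hch : (∫ u in t..(t + n * P), a u) + (∫ u in (t + n * P)..(t + n * P + P), a u)
        = ∫ u in t..(t + (n + 1 : ℕ) * P), a u := by
      rw [intervalIntegral.integral_add_adjacent_intervals (hint _ _) (hint _ _)]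
      congr 1
      push_cast; ring
    have := hblock (t + n * P)
    have := ih t
    push_cast
    push_cast at hch
    linarith

/-- if a is Bohr almost periodic with positive mean value, then
exp(∫_s^t a(u)du) ≤ K exp(σ(t−s)) for all t ≤ s, for some K ≥ 1, σ > 0. -/
theorem exp_integral_bound_of_positive_mean
    (a : ℝ → ℝ) (ha : BohrAPR a) (M : ℝ) (hM : 0 < M)
    (hmean : Tendsto (fun T : ℝ => (1 / (2 * T)) * ∫ s in (-T)..T, a s) atTop (nhds M)) :
    ∃ K : ℝ, 1 ≤ K ∧ ∃ σ : ℝ, 0 < σ ∧ ∀ t s : ℝ, t ≤ s →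
      Real.exp (∫ u in s..t, a u) ≤ K * Real.exp (σ * (t - s)) := by
  obtain ⟨C, hC0, hC⟩ := apr_bounded a ha
  obtain ⟨P, hP, δ, hδ, hblock⟩ := apr_block a ha M hM hmean C hC0 hC
  have hiter := apr_iter a ha.1 P δ hblock
  refine ⟨Real.exp (δ + C * P), Real.one_le_exp (by positivity), δ / P, by positivity,
    fun t s hts => ?_⟩
  have hint : ∀ x y : ℝ, IntervalIntegrable a volume x y :=
    fun x y => ha.1.intervalIntegrable x y
  set n : ℕ := ⌊(s - t) / P⌋₊ with hn
  have hst : 0 ≤ s - t := by linarith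
  have hfl : (n : ℝ) ≤ (s - t) / P := Nat.floor_le (by positivity)
  have hfu : (s - t) / P < n + 1 := Nat.lt_floor_add_one _
  have h1 : t + n * P ≤ s := by
    have := (le_div_iff₀ hP).1 hfl
    linarith
  have h2 : s - (t + n * P) ≤ P := by
    have := (div_lt_iff₀ hP).1 hfu
    nlinarith
  -- lower bound on ∫_t^s
  have hlow : δ / P * (s - t) - (δ + C * P) ≤ ∫ u in t..s, a u := by
    have hch : (∫ u in t..s, a u)
        = (∫ u in t..(t + n * P), a u) + ∫ u in (t + n * P)..s, a u :=
      (intervalIntegral.integral_add_adjacent_intervals (hint _ _) (hint _ _)).symm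
    have htail : |∫ u in (t + n * P)..s, a u| ≤ C * P := by
      have hb := intervalIntegral.norm_integral_le_of_norm_le_const (C := C)
        (f := a) (a := t + n * P) (b := s) (fun x _ => by simpa [Real.norm_eq_abs] using hC x)
      rw [Real.norm_eq_abs] at hb
      have : |s - (t + n * P)| ≤ P := by
        rw [abs_of_nonneg (by linarith)]; exact h2
      calc |∫ u in (t + n * P)..s, a u| ≤ C * |s - (t + n * P)| := hb
        _ ≤ C * P := by nlinarith
    have hmain := hiter n t
    have hcnt : δ / P * (s - t) - δ ≤ (n : ℝ) * δ := by
      have : δ / P * (s - t) = ((s - t) / P) * δ := by field_simp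
      rw [this]
      nlinarith
    have := abs_le.1 htail
    rw [hch]
    linarith
  have hsymm : (∫ u in s..t, a u) = -∫ u in t..s, a u := intervalIntegral.integral_symm t s
  rw [hsymm, ← Real.exp_add]
  exact Real.exp_le_exp.2 (by rw [show δ / P * (t - s) = -(δ / P * (s - t)) by ring]; linarith)
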